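/- Let s ≥ 1 and n > 2s be integers, and set Γ_{n,s} = (∏_{j=0}^{2s−1} (n − 2s + 2j))^{1/s} (this product equals ∏_{j=−s}^{s−1}(n+2j)). Then ∫_{ℝⁿ} (1 + |x|²/Γ_{n,s})^{−(n+2s)/2} dx = Γ_{n,s}^{(n−2s)/2} · 2^{s−1} · (s−1)! · (∏_{i=1}^{s} (n−2i)) · (2π^{n/2}/Γ(n/2)), where the integral is with respect to Lebesgue measure on ℝⁿ, |x| is the Euclidean norm, Γ denotes the Gamma function, and powers with real exponents are real powers of positive reals. -/

import Mathlib

open MeasureTheory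

open Set Real Filter Topology

lemma bubble_cont (k : ℕ) (q : ℝ) :
    Continuous fun r : ℝ => r ^ k * (1 + r ^ 2) ^ q :=
  (continuous_pow k).mul <|
    ((continuous_const : Continuous fun _ : ℝ => (1:ℝ)).add (continuous_pow 2)).rpow_const fun x => Or.inl (show (1:ℝ) + x ^ 2 ≠ 0 by positivity)

lemma bubble_bound {k : ℕ} {e r : ℝ} (hr : 1 ≤ r) (he : 0 ≤ e) :
    r ^ k * (1 + r ^ 2) ^ (-e) ≤ r ^ ((k : ℝ) - 2 * e) := by
  have hr0 : (0:ℝ) < r := lt_of_lt_of_le one_pos hr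
  have h1 : (1 + r ^ 2) ^ (-e) ≤ (r ^ 2) ^ (-e) :=
    Real.rpow_le_rpow_of_nonpos (by positivity) (by nlinarith) (by linarith)
  calc r ^ k * (1 + r ^ 2) ^ (-e) ≤ r ^ k * (r ^ 2) ^ (-e) := by
        exact mul_le_mul_of_nonneg_left h1 (by positivity)
    _ = r ^ ((k : ℝ) - 2 * e) := by
        rw [← Real.rpow_natCast r k, ← Real.rpow_natCast r 2,
          ← Real.rpow_mul hr0.le, ← Real.rpow_add hr0]
        norm_num
        ring_nf

lemma bubble_integrable (m : ℕ) (hm : 1 ≤ m) {e : ℝ} (he : (m : ℝ) < 2 * e) :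
    IntegrableOn (fun r : ℝ => r ^ (m - 1) * (1 + r ^ 2) ^ (-e)) (Ioi (0:ℝ)) := by
  have hm' : (1:ℝ) ≤ (m:ℝ) := by exact_mod_cast hm
  have he0 : 0 ≤ e := by linarith
  have hc := bubble_cont (m - 1) (-e)
  have h1 : IntegrableOn (fun r : ℝ => r ^ (m - 1) * (1 + r ^ 2) ^ (-e)) (Ioc (0:ℝ) 1) :=
    (hc.integrableOn_Icc (a := 0) (b := 1)).mono_set Ioc_subset_Icc_self
  have h2 : IntegrableOn (fun r : ℝ => r ^ (m - 1) * (1 + r ^ 2) ^ (-e)) (Ioi (1:ℝ)) := by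
    have hint : IntegrableOn (fun r : ℝ => r ^ (((m:ℝ) - 1) - 2 * e)) (Ioi (1:ℝ)) :=
      integrableOn_Ioi_rpow_of_lt (by linarith) one_pos
    refine hint.mono' hc.aestronglyMeasurable.restrict ?_
    filter_upwards [ae_restrict_mem measurableSet_Ioi] with r hr
    have hr1 : (1:ℝ) ≤ r := le_of_lt hr
    rw [Real.norm_eq_abs, abs_of_nonneg (by positivity)]
    have := bubble_bound (k := m - 1) hr1 he0
    rw [Nat.cast_sub hm] at this; exact_mod_cast this
  have := h1.union h2
  refine this.mono_set fun x hx => ?_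
  rcases le_or_gt x 1 with h | h
  · exact Or.inl ⟨hx, h⟩
  · exact Or.inr h

lemma bubble_deriv (m : ℕ) (hm : 1 ≤ m) (q : ℝ) (r : ℝ) :
    HasDerivAt (fun t : ℝ => t ^ m * (1 + t ^ 2) ^ q)
      ((m : ℝ) * (r ^ (m - 1) * (1 + r ^ 2) ^ (q - 1))
        + ((m : ℝ) + 2 * q) * (r ^ (m + 1) * (1 + r ^ 2) ^ (q - 1))) r := by
  have h0 : (0:ℝ) < 1 + r ^ 2 := by positivity
  have h1 : HasDerivAt (fun t : ℝ => 1 + t ^ 2) (2 * r) r := by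
    simpa using (hasDerivAt_pow 2 r).const_add 1
  have h2 := h1.rpow_const (p := q) (Or.inl h0.ne')
  have h3 := (hasDerivAt_pow m r).mul h2
  refine h3.congr_deriv ?_; symm
  have hq : (1 + r ^ 2) ^ q = (1 + r ^ 2) ^ (q - 1) * (1 + r ^ 2) := by
    rw [Real.rpow_sub h0, Real.rpow_one]; field_simp
  rw [hq]
  have e1 : r ^ (m - 1) * r ^ 2 = r ^ (m + 1) := by
    rw [← pow_add]; congr 1; omega
  have e2 : r ^ m * r = r ^ (m + 1) := by rw [← pow_succ]
  linear_combination ((m:ℝ) * (1 + r ^ 2) ^ (q - 1)) * e1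
    + (2 * q * (1 + r ^ 2) ^ (q - 1)) * e2
    + (2 * (m:ℝ) * (1 + r ^ 2) ^ (q - 1)) * e2
    - (2 * (m:ℝ) * (1 + r ^ 2) ^ (q - 1)) * e1

lemma bubble_tendsto_one (m : ℕ) :
    Tendsto (fun r : ℝ => r ^ m * (1 + r ^ 2) ^ (-((m : ℝ) / 2))) atTop (𝓝 1) := by
  have t0 : Tendsto (fun r : ℝ => r ^ 2) atTop atTop := tendsto_pow_atTop (by norm_num)
  have t1 : Tendsto (fun r : ℝ => (r ^ 2)⁻¹ + 1) atTop (𝓝 (0 + 1)) :=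
    t0.inv_tendsto_atTop.add tendsto_const_nhds
  have t2 : Tendsto (fun r : ℝ => ((r ^ 2)⁻¹ + 1) ^ (-((m : ℝ) / 2))) atTop
      (𝓝 (((0:ℝ) + 1) ^ (-((m : ℝ) / 2)))) :=
    ((Real.continuousAt_rpow_const _ _ (Or.inl (by norm_num))).tendsto).comp t1
  simp only [zero_add, Real.one_rpow] at t2
  refine t2.congr' ?_
  filter_upwards [eventually_gt_atTop (0:ℝ)] with r hr
  have h2 : (0:ℝ) < r ^ 2 := by positivity
  have key : ((r ^ 2)⁻¹ + 1) = (1 + r ^ 2) / r ^ 2 := by field_simp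
  rw [key, Real.div_rpow (by positivity) h2.le]
  rw [div_eq_iff (by positivity), mul_comm (r ^ m), mul_assoc]
  congr 1
  rw [← Real.rpow_natCast r m, ← Real.rpow_natCast r 2, ← Real.rpow_mul hr.le,
    ← Real.rpow_add hr]
  push_cast
  rw [show (m:ℝ) + 2 * -((m:ℝ)/2) = 0 by ring, Real.rpow_zero, mul_one]

lemma bubble_tendsto_zero (m : ℕ) {c : ℝ} (hc : 0 < c) :
    Tendsto (fun r : ℝ => r ^ m * (1 + r ^ 2) ^ (-(((m : ℝ) + c) / 2))) atTop (𝓝 0) := by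
  have hg : Tendsto (fun r : ℝ => r ^ (-c)) atTop (𝓝 0) := tendsto_rpow_neg_atTop hc
  refine squeeze_zero' ?_ ?_ hg
  · filter_upwards [eventually_gt_atTop (0:ℝ)] with r hr
    positivity
  · filter_upwards [eventually_ge_atTop (1:ℝ)] with r hr
    have := bubble_bound (k := m) (e := ((m : ℝ) + c) / 2) hr (by positivity)
    convert this using 2
    ring

lemma bubble_radial (t : ℕ) : ∀ m : ℕ, 1 ≤ m →
    ∫ r in Ioi (0:ℝ), r ^ (m - 1) * (1 + r ^ 2) ^ (-(((m:ℝ) + 2 * (t + 1)) / 2))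
      = 2 ^ t * (Nat.factorial t) / ∏ j ∈ Finset.range (t + 1), ((m : ℝ) + 2 * j) := by
  induction t with
  | zero =>
    intro m hm
    have hm0 : (0:ℝ) < (m:ℝ) := by exact_mod_cast hm
    have hd : ∀ x ∈ Ici (0:ℝ),
        HasDerivAt (fun r : ℝ => (m:ℝ)⁻¹ * (r ^ m * (1 + r ^ 2) ^ (-((m:ℝ) / 2))))
          (x ^ (m - 1) * (1 + x ^ 2) ^ (-(((m:ℝ) + 2 * ((0:ℕ) + 1)) / 2))) x := by
      intro x _
      have h := (bubble_deriv m hm (-((m:ℝ)/2)) x).const_mul ((m:ℝ)⁻¹)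
      refine h.congr_deriv ?_; symm
      rw [show -((m:ℝ)/2) - 1 = -(((m:ℝ) + 2 * ((0:ℕ) + 1)) / 2) by push_cast; ring]
      field_simp
      ring
    have hint : IntegrableOn
        (fun x : ℝ => x ^ (m - 1) * (1 + x ^ 2) ^ (-(((m:ℝ) + 2 * ((0:ℕ) + 1)) / 2)))
        (Ioi (0:ℝ)) := bubble_integrable m hm (by push_cast; linarith)
    have htend : Tendsto (fun r : ℝ => (m:ℝ)⁻¹ * (r ^ m * (1 + r ^ 2) ^ (-((m:ℝ) / 2))))
        atTop (𝓝 ((m:ℝ)⁻¹ * 1)) := (bubble_tendsto_one m).const_mul _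
    have := integral_Ioi_of_hasDerivAt_of_tendsto' hd hint htend
    rw [this, zero_pow (show m ≠ 0 by omega)]
    simp [Nat.factorial]
  | succ t ih =>
    intro m hm
    have hm0 : (0:ℝ) < (m:ℝ) := by exact_mod_cast hm
    set q : ℝ := -(((m:ℝ) + 2 * (t + 1)) / 2) with hq
    have hq1 : q - 1 = -(((m:ℝ) + 2 * ((t+1:ℕ) + 1)) / 2) := by rw [hq]; push_cast; ring
    have hq2 : q - 1 = -(((((m+2):ℕ)):ℝ) + 2 * ((t:ℕ) + 1)) / 2 := by rw [hq]; push_cast; ring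
    -- integrands
    have hint1 : IntegrableOn
        (fun x : ℝ => x ^ (m - 1) * (1 + x ^ 2) ^ (-(((m:ℝ) + 2 * ((t+1:ℕ) + 1)) / 2)))
        (Ioi (0:ℝ)) := bubble_integrable m hm (by push_cast; linarith [(Nat.cast_nonneg t : (0:ℝ) ≤ (t:ℝ))])
    have hint2 : IntegrableOn
        (fun x : ℝ => x ^ (m + 1) * (1 + x ^ 2) ^ (-(((m:ℝ) + 2 * ((t+1:ℕ) + 1)) / 2)))
        (Ioi (0:ℝ)) := by
      have := bubble_integrable (m + 2) (by omega)
          (e := ((m:ℝ) + 2 * ((t+1:ℕ) + 1)) / 2) (by push_cast; linarith [(Nat.cast_nonneg t : (0:ℝ) ≤ (t:ℝ))])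
      simpa using this
    have hd : ∀ x ∈ Ici (0:ℝ),
        HasDerivAt (fun r : ℝ => r ^ m * (1 + r ^ 2) ^ q)
          ((m:ℝ) * (x ^ (m - 1) * (1 + x ^ 2) ^ (-(((m:ℝ) + 2 * ((t+1:ℕ) + 1)) / 2)))
            - (2 * ((t:ℝ) + 1)) * (x ^ (m + 1) * (1 + x ^ 2) ^ (-(((m:ℝ) + 2 * ((t+1:ℕ) + 1)) / 2)))) x := by
      intro x _
      have h := bubble_deriv m hm q x
      rw [hq1] at h
      convert h using 1
      have : (m:ℝ) + 2 * q = -(2 * ((t:ℝ) + 1)) := by rw [hq]; push_cast; ring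
      rw [this]
      ring
    have htend : Tendsto (fun r : ℝ => r ^ m * (1 + r ^ 2) ^ q) atTop (𝓝 0) := by
      have := bubble_tendsto_zero m (c := 2 * ((t:ℝ) + 1)) (by positivity)
      convert this using 4
      all_goals (rw [hq]; push_cast; ring)
    have hZ := integral_Ioi_of_hasDerivAt_of_tendsto' hd
      ((hint1.const_mul _).sub (hint2.const_mul _)) htend
    rw [MeasureTheory.integral_sub (hint1.const_mul _) (hint2.const_mul _),
      integral_const_mul, integral_const_mul, zero_pow (show m ≠ 0 by omega), zero_mul,
      sub_zero] at hZ
    have hJ2 := ih (m + 2) (by omega)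
    rw [show m + 2 - 1 = m + 1 from rfl,
      show (-(((((m + 2 : ℕ)):ℝ) + 2 * ((t:ℕ) + 1)) / 2)) = (-(((m:ℝ) + 2 * (((t + 1):ℕ) + 1)) / 2))
        from by push_cast; ring] at hJ2
    rw [hJ2] at hZ
    have hprod : ∏ j ∈ Finset.range (t + 1 + 1), ((m:ℝ) + 2 * j)
        = (∏ j ∈ Finset.range (t + 1), ((((m + 2 : ℕ)):ℝ) + 2 * j)) * (m:ℝ) := by
      rw [Finset.prod_range_succ']
      congr 1
      · exact Finset.prod_congr rfl fun j _ => by push_cast; ring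
      · norm_num
    have hP0 : (∏ j ∈ Finset.range (t + 1), ((((m + 2 : ℕ)):ℝ) + 2 * j)) ≠ 0 := by
      refine ne_of_gt (Finset.prod_pos fun j _ => ?_)
      have : (0:ℝ) ≤ (j:ℝ) := Nat.cast_nonneg j
      push_cast
      linarith [hm0]
    rw [hprod, Nat.factorial_succ]
    push_cast at hZ ⊢
    field_simp at hZ ⊢
    linear_combination hZ

/-- Energy identity for the standard bubble:
`∫_{ℝⁿ} (1 + |x|²/Γ_{n,s})^{-(n+2s)/2} dx
  = Γ_{n,s}^{(n-2s)/2} · 2^{s-1} (s-1)! (∏_{i=1}^s (n-2i)) · (2π^{n/2}/Γ(n/2))`,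
where `Γ_{n,s} = (∏_{j=0}^{2s-1} (n - 2s + 2j))^{1/s}`. -/
theorem stmt8 (s n : ℕ) (hs : 1 ≤ s) (hn : 2 * s < n) :
    (∫ x : EuclideanSpace ℝ (Fin n),
        (1 + ‖x‖ ^ 2 / ((∏ j ∈ Finset.range (2 * s), ((n : ℝ) - 2 * s + 2 * j)) ^ ((1 : ℝ) / s)))
          ^ (-(((n : ℝ) + 2 * s) / 2)))
      = ((∏ j ∈ Finset.range (2 * s), ((n : ℝ) - 2 * s + 2 * j)) ^ ((1 : ℝ) / s))
            ^ (((n : ℝ) - 2 * s) / 2)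
        * 2 ^ (s - 1) * (Nat.factorial (s - 1))
        * (∏ i ∈ Finset.Icc 1 s, ((n : ℝ) - 2 * i))
        * (2 * Real.pi ^ ((n : ℝ) / 2) / Real.Gamma ((n : ℝ) / 2)) := by
  have hns : (2 * s : ℝ) < n := by exact_mod_cast hn
  have hn0 : (0:ℝ) < n := by
    have h2 : (0:ℝ) ≤ 2 * s := by positivity
    linarith
  set P : ℝ := ∏ j ∈ Finset.range (2 * s), ((n : ℝ) - 2 * s + 2 * j) with hPdef
  have hP : 0 < P := Finset.prod_pos fun j _ => by
    have hj : (0:ℝ) ≤ (j:ℝ) := Nat.cast_nonneg j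
    linarith
  set G : ℝ := P ^ ((1:ℝ)/s) with hGdef
  have hG : 0 < G := Real.rpow_pos_of_pos hP _
  set E : ℝ := -(((n : ℝ) + 2 * s) / 2) with hEdef
  haveI : Nonempty (Fin n) := ⟨⟨0, by omega⟩⟩
  haveI : Nontrivial (EuclideanSpace ℝ (Fin n)) :=
    Module.nontrivial_of_finrank_pos (R := ℝ)
      (by rw [finrank_euclideanSpace_fin]; omega)
  have hpolar : (∫ x : EuclideanSpace ℝ (Fin n), (1 + ‖x‖ ^ 2 / G) ^ E)
      = n • (volume (Metric.ball (0:EuclideanSpace ℝ (Fin n)) 1)).toReal •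
          ∫ y in Ioi (0:ℝ), y ^ (n - 1) • ((1 + y ^ 2 / G) ^ E) := by
    have h := MeasureTheory.integral_fun_norm_addHaar
      (volume : Measure (EuclideanSpace ℝ (Fin n)))
      (fun y : ℝ => (1 + y ^ 2 / G) ^ E)
    simpa only [finrank_euclideanSpace_fin, Measure.real] using h
  rw [hpolar]
  have hball : (volume (Metric.ball (0:EuclideanSpace ℝ (Fin n)) 1)).toReal
      = Real.pi ^ ((n:ℝ)/2) / Real.Gamma ((n:ℝ)/2 + 1) := by
    rw [EuclideanSpace.volume_ball]
    simp only [Fintype.card_fin, ENNReal.ofReal_one, one_pow, one_mul]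
    rw [ENNReal.toReal_ofReal (by positivity)]
    congr 1
    rw [Real.sqrt_eq_rpow, ← Real.rpow_natCast (Real.pi ^ ((1:ℝ)/2)) n,
      ← Real.rpow_mul Real.pi_pos.le]
    congr 1
    ring
  rw [hball]
  -- substitution in the radial integral
  set c := Real.sqrt G with hcdef
  have hc : 0 < c := Real.sqrt_pos.2 hG
  have hc2 : c ^ 2 = G := Real.sq_sqrt hG.le
  have hsub : (∫ y in Ioi (0:ℝ), y ^ (n - 1) • ((1 + y ^ 2 / G) ^ E))
      = G ^ ((n:ℝ)/2) * ∫ r in Ioi (0:ℝ), r ^ (n - 1) * (1 + r ^ 2) ^ E := by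
    simp only [smul_eq_mul]
    have h := integral_comp_mul_left_Ioi
      (g := fun y : ℝ => y ^ (n - 1) * (1 + y ^ 2 / G) ^ E) 0 hc
    rw [mul_zero] at h
    have heq : ∀ x ∈ Ioi (0:ℝ),
        (c * x) ^ (n - 1) * (1 + (c * x) ^ 2 / G) ^ E
          = c ^ (n - 1) * (x ^ (n - 1) * (1 + x ^ 2) ^ E) := by
      intro x _
      rw [mul_pow, mul_pow, hc2, mul_div_cancel_left₀ _ hG.ne']
      ring
    rw [setIntegral_congr_fun measurableSet_Ioi heq, integral_const_mul,
      smul_eq_mul] at h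
    have hcn : c * c ^ (n - 1) = G ^ ((n:ℝ)/2) := by
      rw [← pow_succ', Nat.sub_add_cancel (by omega : 1 ≤ n), hcdef,
        Real.sqrt_eq_rpow, ← Real.rpow_natCast (G ^ ((1:ℝ)/2)) n,
        ← Real.rpow_mul hG.le]
      congr 1
      ring
    have hT : (∫ y in Ioi (0:ℝ), y ^ (n - 1) * (1 + y ^ 2 / G) ^ E)
        = c * (c ^ (n - 1) * ∫ r in Ioi (0:ℝ), r ^ (n - 1) * (1 + r ^ 2) ^ E) := by
      rw [h, ← mul_assoc, mul_inv_cancel₀ hc.ne', one_mul]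
    rw [hT, ← mul_assoc, hcn]
  rw [hsub]
  -- radial integral value
  have hrad := bubble_radial (s - 1) n (by omega)
  have hcast : ((s - 1 : ℕ) : ℝ) = (s : ℝ) - 1 := by
    rw [Nat.cast_sub hs]; norm_num
  rw [show (-(((n:ℝ) + 2 * (((s-1:ℕ)) + 1)) / 2)) = E from by
      rw [hEdef, hcast]; ring,
    Nat.sub_add_cancel hs] at hrad
  rw [hrad]
  -- algebraic endgame
  set Q : ℝ := ∏ j ∈ Finset.range s, ((n : ℝ) + 2 * j) with hQdef
  have hQ : 0 < Q := Finset.prod_pos fun j _ => by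
    have hj : (0:ℝ) ≤ (j:ℝ) := Nat.cast_nonneg j
    linarith
  set R : ℝ := ∏ i ∈ Finset.Icc 1 s, ((n : ℝ) - 2 * i) with hRdef
  have hPsplit : P = R * Q := by
    rw [hPdef, two_mul, Finset.prod_range_add]
    congr 1
    · rw [hRdef, ← Finset.Ico_add_one_right_eq_Icc, Finset.prod_Ico_eq_prod_range]
      rw [show s + 1 - 1 = s from rfl]
      rw [← Finset.prod_range_reflect (fun j => (n:ℝ) - 2 * ((1 + j : ℕ) : ℝ)) s]
      refine Finset.prod_congr rfl fun j hj => ?_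
      have hjs : j < s := Finset.mem_range.mp hj
      have h1 : 1 + (s - 1 - j) = s - j := by omega
      rw [h1, Nat.cast_sub hjs.le]
      ring
    · refine Finset.prod_congr rfl fun j _ => by push_cast; ring
  have hGn : G ^ ((n:ℝ)/2) = G ^ (((n:ℝ) - 2 * s)/2) * P := by
    have h1 : G ^ ((s:ℝ)) = P := by
      rw [hGdef, ← Real.rpow_mul hP.le, one_div,
        inv_mul_cancel₀ (Nat.cast_pos.mpr hs).ne',
        Real.rpow_one]
    rw [← h1, ← Real.rpow_add hG]
    congr 1
    ring
  have hGamma : Real.Gamma ((n:ℝ)/2 + 1) = ((n:ℝ)/2) * Real.Gamma ((n:ℝ)/2) :=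
    Real.Gamma_add_one (by positivity)
  have hGpos : 0 < Real.Gamma ((n:ℝ)/2) := Real.Gamma_pos_of_pos (by positivity)
  rw [hGamma, hGn, hPsplit, nsmul_eq_mul, smul_eq_mul]
  field_simp
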